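/- Let z_1,…,z_N be N distinct complex numbers and let D be the N×N complex matrix with D_{ii} = Σ_{k≠i} 1/(z_i − z_k) and, for i ≠ j, D_{ij} = ω'(z_i)/((z_i − z_j) ω'(z_j)), where ω'(z_i) = ∏_{k≠i}(z_i − z_k). If f is a complex polynomial of degree at most N−1, then for every n ≥ 0 and every i, the n-th derivative satisfies f^{(n)}(z_i) = Σ_{j=1}^N (D^n)_{ij} f(z_j), where D^n is the n-th matrix power of D. -/

import Mathlib

open Finset

open Polynomial


lemma derivative_finset_prod {ι : Type*} [DecidableEq ι] (s : Finset ι) (f : ι → Polynomial ℂ) :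
    Polynomial.derivative (∏ b ∈ s, f b) =
      ∑ b ∈ s, (∏ a ∈ s.erase b, f a) * Polynomial.derivative (f b) := by
  classical
  induction s using Finset.induction_on with
  | empty => simp
  | insert x s hx ih =>
    rw [Finset.prod_insert hx, derivative_mul, ih, Finset.sum_insert hx,
      Finset.erase_insert hx, Finset.mul_sum]
    congr 1
    · ring
    · refine Finset.sum_congr rfl fun b hb => ?_
      rw [Finset.erase_insert_of_ne (by rintro rfl; exact hx hb),
        Finset.prod_insert (fun h => hx (Finset.mem_of_mem_erase h))]
      ring

lemma deriv_basisDivisor (x y : ℂ) :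
    Polynomial.derivative (Lagrange.basisDivisor x y) = C (x - y)⁻¹ := by
  simp [Lagrange.basisDivisor]

lemma deriv_basis_eval (N : ℕ) (zs : Fin N → ℂ) (hz : Function.Injective zs) (i j : Fin N) :
    (Polynomial.derivative (Lagrange.basis univ zs j)).eval (zs i) =
      if i = j then ∑ k ∈ Finset.univ.erase i, 1 / (zs i - zs k)
      else (∏ k ∈ Finset.univ.erase i, (zs i - zs k)) /
        ((zs i - zs j) * ∏ k ∈ Finset.univ.erase j, (zs j - zs k)) := by
  have hne : ∀ a b : Fin N, a ≠ b → zs a - zs b ≠ 0 := fun a b h => sub_ne_zero.mpr (fun e => h (hz e))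
  rw [Lagrange.basis, derivative_finset_prod]
  have hevalBD : ∀ x y z : ℂ, eval z (Lagrange.basisDivisor x y) = (x - y)⁻¹ * (z - y) := by
    intro x y z; simp [Lagrange.basisDivisor]
  simp only [deriv_basisDivisor, eval_finset_sum, eval_mul, eval_prod, eval_C, hevalBD]
  by_cases hij : i = j
  · subst hij
    simp only [if_pos rfl]
    refine Finset.sum_congr rfl fun m hm => ?_
    have h1 : ∀ k ∈ (univ.erase i).erase m, (zs i - zs k)⁻¹ * (zs i - zs k) = 1 := by
      intro k hk
      have hki : k ≠ i := (Finset.mem_erase.mp (Finset.mem_of_mem_erase hk)).1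
      exact inv_mul_cancel₀ (hne i k (Ne.symm hki))
    rw [Finset.prod_congr rfl h1, Finset.prod_const_one, one_mul, one_div]
  · rw [if_neg hij]
    rw [Finset.sum_eq_single i]
    · have hS : (univ.erase j).erase i = (univ.erase i).erase j := by
        rw [Finset.erase_right_comm]
      rw [hS]
      have hprodi : ∏ k ∈ univ.erase i, (zs i - zs k)
          = (zs i - zs j) * ∏ k ∈ (univ.erase i).erase j, (zs i - zs k) := by
        exact (Finset.mul_prod_erase _ _ (Finset.mem_erase.mpr ⟨Ne.symm hij, Finset.mem_univ j⟩)).symm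
      have hprodj : ∏ k ∈ univ.erase j, (zs j - zs k)
          = (zs j - zs i) * ∏ k ∈ (univ.erase i).erase j, (zs j - zs k) := by
        rw [← hS]; exact (Finset.mul_prod_erase _ _ (Finset.mem_erase.mpr ⟨hij, Finset.mem_univ i⟩)).symm
      rw [hprodi, hprodj, Finset.prod_mul_distrib, Finset.prod_inv_distrib]
      have h1 : (∏ k ∈ (univ.erase i).erase j, (zs j - zs k)) ≠ 0 := by
        refine Finset.prod_ne_zero_iff.mpr fun k hk => ?_
        exact hne j k (Ne.symm (Finset.mem_erase.mp hk).1)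
      have h2 : zs i - zs j ≠ 0 := hne i j hij
      have h3 : zs j - zs i ≠ 0 := hne j i (Ne.symm hij)
      field_simp
    · intro m hm hmne
      have hi : i ∈ (univ.erase j).erase m :=
        Finset.mem_erase.mpr ⟨Ne.symm hmne, Finset.mem_erase.mpr ⟨hij, Finset.mem_univ i⟩⟩
      rw [Finset.prod_eq_zero hi (by simp), zero_mul]
    · intro h
      exact absurd (Finset.mem_erase.mpr ⟨hij, Finset.mem_univ i⟩) h

lemma deriv_step (N : ℕ) (zs : Fin N → ℂ) (hz : Function.Injective zs)
    (f : Polynomial ℂ) (hf : f.degree < N) (i : Fin N) :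
    f.derivative.eval (zs i) = ∑ j, (Polynomial.derivative (Lagrange.basis univ zs j)).eval (zs i)
      * f.eval (zs j) := by
  have hinj : Set.InjOn zs (univ : Finset (Fin N)) := fun a _ b _ h => hz h
  have hcard : f.degree < #(univ : Finset (Fin N)) := by
    rwa [Finset.card_univ, Fintype.card_fin]
  conv_lhs => rw [Lagrange.eq_interpolate hinj hcard]
  rw [Lagrange.interpolate_apply, map_sum, eval_finset_sum]
  refine Finset.sum_congr rfl fun j _ => ?_
  rw [derivative_mul, derivative_C, zero_mul, zero_add, eval_mul, eval_C]
  ring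

/-- Powers of the algebraic differentiation matrix give higher derivatives: if `f` is a
complex polynomial of degree at most `N − 1`, then for every `n ≥ 0`,
`f⁽ⁿ⁾(z i) = Σ_j (Dⁿ) i j * f (z j)`. -/
theorem algebraic_differentiation_matrix_pow (N : ℕ) (zs : Fin N → ℂ)
    (hz : Function.Injective zs) (D : Matrix (Fin N) (Fin N) ℂ)
    (hD : ∀ i j, D i j =
      if i = j then ∑ k ∈ Finset.univ.erase i, 1 / (zs i - zs k)
      else (∏ k ∈ Finset.univ.erase i, (zs i - zs k)) /
        ((zs i - zs j) * ∏ k ∈ Finset.univ.erase j, (zs j - zs k)))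
    (f : Polynomial ℂ) (hf : f.degree ≤ (N - 1 : ℕ)) (n : ℕ) (i : Fin N) :
    iteratedDeriv n (fun z : ℂ => f.eval z) (zs i) = ∑ j, (D ^ n) i j * f.eval (zs j) := by
  rcases Nat.eq_zero_or_pos N with rfl | hN
  · exact i.elim0
  have hdeg : ∀ g : Polynomial ℂ, g.degree ≤ ((N - 1 : ℕ) : WithBot ℕ) → g.degree < N := by
    intro g hg
    exact lt_of_le_of_lt hg (by exact_mod_cast Nat.sub_lt hN one_pos)
  have key : ∀ (g : Polynomial ℂ), g.degree < N → ∀ i : Fin N,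
      g.derivative.eval (zs i) = ∑ j, D i j * g.eval (zs j) := by
    intro g hg i
    rw [deriv_step N zs hz g hg i]
    refine Finset.sum_congr rfl fun j _ => ?_
    rw [deriv_basis_eval N zs hz i j, hD]
  induction n generalizing f with
  | zero =>
    simp [Matrix.one_apply]
  | succ n ih =>
    rw [iteratedDeriv_succ']
    have hderiv : (deriv fun z : ℂ => f.eval z) = fun z : ℂ => f.derivative.eval z := by
      funext z; exact Polynomial.deriv f
    rw [hderiv, ih f.derivative (le_trans f.degree_derivative_le hf)]
    have : ∀ j : Fin N, f.derivative.eval (zs j) = ∑ k, D j k * f.eval (zs k) :=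
      fun j => key f (hdeg f hf) j
    calc ∑ j, (D ^ n) i j * f.derivative.eval (zs j)
        = ∑ j, ∑ k, (D ^ n) i j * D j k * f.eval (zs k) := by
          refine Finset.sum_congr rfl fun j _ => ?_
          rw [this j, Finset.mul_sum]
          exact Finset.sum_congr rfl fun k _ => by ring
      _ = ∑ k, ∑ j, (D ^ n) i j * D j k * f.eval (zs k) := Finset.sum_comm
      _ = ∑ k, (D ^ (n + 1)) i k * f.eval (zs k) := by
          refine Finset.sum_congr rfl fun k _ => ?_
          rw [pow_succ, Matrix.mul_apply, Finset.sum_mul]
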